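/- Let ν = Σ_{n≥1} 2^{-n} δ_{2^n} and g(x) = ∫ dν(s)/(s-x)². For each n ≥ 1, if x_n = (2^n + 2^{n+1})/2 is the midpoint of I_n = (2^n, 2^{n+1}), then g(x_n) ≤ 2^{-2n+2}. Consequently, for every t > 1 there exist infinitely many n with inf_{I_n} g < 1/(t-1). -/

import Mathlib

open MeasureTheory Set ENNReal

noncomputable def nu : Measure ℝ :=
  Measure.sum (fun n : ℕ => ((2 : ℝ≥0∞)⁻¹ ^ (n + 1)) • Measure.dirac ((2 : ℝ) ^ (n + 1)))

noncomputable def gfun (x : ℝ) : ℝ≥0∞ :=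
  ∫⁻ s : ℝ, ENNReal.ofReal (((s - x) ^ 2)⁻¹) ∂nu

lemma gfun_eq (x : ℝ) :
    gfun x = ∑' m : ℕ, (2 : ℝ≥0∞)⁻¹ ^ (m + 1) *
      ENNReal.ofReal ((((2 : ℝ) ^ (m + 1) - x) ^ 2)⁻¹) := by
  unfold gfun nu
  rw [lintegral_sum_measure]
  simp [lintegral_smul_measure, lintegral_dirac]

lemma geom_one : ∑' m : ℕ, (2 : ℝ≥0∞)⁻¹ ^ (m + 1) = 1 := by
  simp_rw [pow_succ']
  rw [ENNReal.tsum_mul_left, ENNReal.tsum_geometric]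
  rw [ENNReal.one_sub_inv_two]
  simp [ENNReal.inv_mul_cancel]

lemma key (n : ℕ) :
    gfun (((2 : ℝ) ^ (n + 1) + (2 : ℝ) ^ (n + 2)) / 2)
      ≤ ENNReal.ofReal (((4 : ℝ) ^ n)⁻¹) := by
  set x : ℝ := ((2 : ℝ) ^ (n + 1) + (2 : ℝ) ^ (n + 2)) / 2 with hxdef
  have hx : x = 3 * 2 ^ n := by rw [hxdef, pow_succ, pow_succ, pow_succ]; ring
  rw [gfun_eq]
  have hbound : ∀ m : ℕ,
      ENNReal.ofReal ((((2 : ℝ) ^ (m + 1) - x) ^ 2)⁻¹) ≤ ENNReal.ofReal (((4 : ℝ) ^ n)⁻¹) := by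
    intro m
    apply ENNReal.ofReal_le_ofReal
    have habs : (2 : ℝ) ^ n ≤ |(2 : ℝ) ^ (m + 1) - x| := by
      rcases le_or_gt m n with hm | hm
      · have h1 : (2 : ℝ) ^ (m + 1) ≤ 2 ^ (n + 1) :=
          pow_le_pow_right₀ one_le_two (by omega)
        calc (2 : ℝ) ^ n ≤ x - 2 ^ (m + 1) := by
              have h2 : (2 : ℝ) ^ (n + 1) = 2 ^ n * 2 := pow_succ 2 n
              rw [hx]; linarith
          _ ≤ |(2 : ℝ) ^ (m + 1) - x| := by rw [abs_sub_comm]; exact le_abs_self _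
      · have h1 : (2 : ℝ) ^ (n + 2) ≤ 2 ^ (m + 1) :=
          pow_le_pow_right₀ one_le_two (by omega)
        calc (2 : ℝ) ^ n ≤ 2 ^ (m + 1) - x := by
              rw [hx] at *
              have : (2:ℝ) ^ (n+2) = 4 * 2 ^ n := by rw [pow_succ, pow_succ]; ring
              nlinarith [pow_pos (by norm_num : (0:ℝ) < 2) n]
          _ ≤ |(2 : ℝ) ^ (m + 1) - x| := le_abs_self _
    have hsq : (4 : ℝ) ^ n ≤ ((2 : ℝ) ^ (m + 1) - x) ^ 2 := by
      have := pow_le_pow_left₀ (by positivity) habs 2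
      rw [sq_abs] at this
      calc (4 : ℝ) ^ n = ((2 : ℝ) ^ n) ^ 2 := by rw [show (4:ℝ) = 2^2 by norm_num, ← pow_mul, ← pow_mul, Nat.mul_comm]
        _ ≤ _ := this
    have h4 : (0 : ℝ) < 4 ^ n := by positivity
    exact inv_anti₀ h4 hsq
  calc (∑' m : ℕ, (2 : ℝ≥0∞)⁻¹ ^ (m + 1) *
        ENNReal.ofReal ((((2 : ℝ) ^ (m + 1) - x) ^ 2)⁻¹))
      ≤ ∑' m : ℕ, (2 : ℝ≥0∞)⁻¹ ^ (m + 1) * ENNReal.ofReal (((4 : ℝ) ^ n)⁻¹) :=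
        ENNReal.tsum_le_tsum fun m => mul_le_mul_right (hbound m) _
    _ = ENNReal.ofReal (((4 : ℝ) ^ n)⁻¹) := by
        rw [ENNReal.tsum_mul_right, geom_one, one_mul]

theorem stmt_17 :
    (∀ n : ℕ,
      gfun (((2 : ℝ) ^ (n + 1) + (2 : ℝ) ^ (n + 2)) / 2)
        ≤ ENNReal.ofReal (4 / 4 ^ (n + 1))) ∧
    ∀ t : ℝ, 1 < t →
      {n : ℕ | ∃ x ∈ Ioo ((2 : ℝ) ^ (n + 1)) ((2 : ℝ) ^ (n + 2)),
        gfun x < ENNReal.ofReal (1 / (t - 1))}.Infinite := by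
  have heq : ∀ n : ℕ, (4 : ℝ) / 4 ^ (n + 1) = ((4 : ℝ) ^ n)⁻¹ := by
    intro n
    rw [pow_succ]
    field_simp
  constructor
  · intro n
    rw [heq n]
    exact key n
  · intro t ht
    have ht' : 0 < t - 1 := by linarith
    obtain ⟨N, hN⟩ := pow_unbounded_of_one_lt (t - 1) (by norm_num : (1 : ℝ) < 4)
    apply Set.Infinite.mono (s := Set.Ici N)
    · intro n hn
      have hn : N ≤ n := hn
      refine ⟨((2 : ℝ) ^ (n + 1) + (2 : ℝ) ^ (n + 2)) / 2, ⟨?_, ?_⟩, ?_⟩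
      · have : (2 : ℝ) ^ (n + 1) < 2 ^ (n + 2) :=
          pow_lt_pow_right₀ one_lt_two (by omega)
        linarith
      · have : (2 : ℝ) ^ (n + 1) < 2 ^ (n + 2) :=
          pow_lt_pow_right₀ one_lt_two (by omega)
        linarith
      · refine lt_of_le_of_lt (key n) ?_
        rw [ENNReal.ofReal_lt_ofReal_iff (by positivity)]
        rw [one_div]
        rw [inv_lt_inv₀ (by positivity) ht']
        calc t - 1 < 4 ^ N := hN
          _ ≤ 4 ^ n := pow_le_pow_right₀ (by norm_num) hn
    · exact Set.Ici_infinite N
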